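/- Let d ≥ 1 and R > 1. Then lim_{α→0⁺} α ∫_{{y ∈ ℝ^d : |y| > R}} (|y| − 1)^{−d} |y|^{−α} dy = |S^{d−1}|. -/

import Mathlib

open MeasureTheory Metric Set Filter

/-- The surface measure of the unit sphere `S^{d-1}` in `ℝ^d`. -/
noncomputable def sphereMeasure (d : ℕ) : ℝ :=
  2 * Real.pi ^ ((d : ℝ) / 2) / Real.Gamma ((d : ℝ) / 2)

section Aux

open Real

lemma key_limit (d : ℕ) (hd : 1 ≤ d) (R : ℝ) (hR : 1 < R) :
    Tendsto (fun α : ℝ => α * ∫ y in Ioi R, (y : ℝ) ^ (d - 1) *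
        ((y - 1) ^ (-(d : ℝ)) * y ^ (-α)))
      (nhdsWithin 0 (Ioi 0)) (nhds 1) := by
  obtain ⟨n, rfl⟩ : ∃ n, d = n + 1 := ⟨d - 1, (Nat.succ_pred_eq_of_pos hd).symm⟩
  have hR0 : (0:ℝ) < R := lt_trans one_pos hR
  set h : ℝ → ℝ := fun y => y ^ n * (y - 1) ^ (-(n + 1 : ℝ)) - y⁻¹ with hh
  set C : ℝ := (n + 1) * (R / (R - 1)) ^ (n + 1) with hC
  -- pointwise facts on Ioi R
  have hfact : ∀ y ∈ Ioi R, 0 ≤ h y ∧ h y ≤ C * (y ^ 2)⁻¹ := by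
    intro y hy
    have hy1 : 1 < y := hR.trans hy
    have hy0 : 0 < y := lt_trans one_pos hy1
    have hym : 0 < y - 1 := by linarith
    have hy' : R < y := hy
    have hRm : (0:ℝ) < R - 1 := by linarith
    have hcpos : 0 < (R - 1)/R := div_pos hRm hR0
    have e1 : (y - 1) ^ (-(n + 1 : ℝ)) = ((y - 1) ^ (n + 1))⁻¹ := by
      rw [show (-(n + 1 : ℝ)) = -((n+1 : ℕ) : ℝ) by push_cast; ring,
        Real.rpow_neg hym.le, Real.rpow_natCast]
    have hval : h y = (y ^ (n+1) - (y-1) ^ (n+1)) / (y * (y-1) ^ (n+1)) := by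
      rw [hh]; simp only [e1]
      field_simp
      ring
    have hnum0 : 0 ≤ y ^ (n+1) - (y-1) ^ (n+1) := by
      have := pow_le_pow_left₀ hym.le (by linarith : y - 1 ≤ y) (n+1)
      linarith
    have hden : 0 < y * (y-1) ^ (n+1) := by positivity
    constructor
    · rw [hval]; positivity
    · -- numerator bound
      have hnum : y ^ (n+1) - (y-1) ^ (n+1) ≤ (n + 1 : ℝ) * y ^ n := by
        have hid := geom_sum₂_mul y (y-1) (n+1)
        have : y - (y - 1) = 1 := by ring
        rw [this, mul_one] at hid
        rw [← hid]
        have : ∀ i ∈ Finset.range (n+1), y ^ i * (y-1) ^ (n + 1 - 1 - i) ≤ y ^ n := by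
          intro i hi
          have hi' : i ≤ n := by simpa using Finset.mem_range_succ_iff.mp hi
          calc y ^ i * (y-1) ^ (n + 1 - 1 - i) ≤ y ^ i * y ^ (n - i) := by
                simp only [Nat.add_sub_cancel]
                exact mul_le_mul_of_nonneg_left
                  (pow_le_pow_left₀ hym.le (by linarith) _) (by positivity)
            _ = y ^ n := by rw [← pow_add]; congr 1; omega
        calc (∑ i ∈ Finset.range (n+1), y ^ i * (y-1) ^ (n + 1 - 1 - i))
            ≤ ∑ _i ∈ Finset.range (n+1), y ^ n := Finset.sum_le_sum this
          _ = (n + 1 : ℝ) * y ^ n := by simp [mul_comm]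
      -- denominator bound: (y-1) ≥ (R-1)/R * y
      have hden2 : ((R - 1)/R * y) ^ (n+1) ≤ (y - 1) ^ (n+1) := by
        apply pow_le_pow_left₀ (by positivity)
        rw [div_mul_eq_mul_div, div_le_iff₀ hR0]
        nlinarith
      have hden2' : 0 < ((R - 1)/R * y) ^ (n+1) := pow_pos (by positivity) _
      calc h y = (y ^ (n+1) - (y-1) ^ (n+1)) / (y * (y-1) ^ (n+1)) := hval
        _ ≤ ((n + 1 : ℝ) * y ^ n) / (y * (y-1) ^ (n+1)) := by gcongr
        _ ≤ ((n + 1 : ℝ) * y ^ n) / (y * ((R - 1)/R * y) ^ (n+1)) := by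
            gcongr
        _ = C * (y ^ 2)⁻¹ := by
            rw [hC, mul_pow, div_pow, div_pow]
            have hR1 : R - 1 ≠ 0 := by linarith
            field_simp
            ring
  -- measurability helpers
  have hmeas_h : AEStronglyMeasurable h (volume.restrict (Ioi R)) := by
    apply Measurable.aestronglyMeasurable
    fun_prop
  have hmeas_hα : ∀ α : ℝ, AEStronglyMeasurable (fun y => h y * y ^ (-α))
      (volume.restrict (Ioi R)) := by
    intro α
    apply Measurable.aestronglyMeasurable
    fun_prop
  -- integrability of the dominating function
  have hbound_int : IntegrableOn (fun y : ℝ => C * (y ^ 2)⁻¹) (Ioi R) := by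
    have h2 : IntegrableOn (fun x : ℝ => x ^ (-2 : ℝ)) (Ioi R) :=
      integrableOn_Ioi_rpow_of_lt (by norm_num) hR0
    have : IntegrableOn (fun y : ℝ => (y ^ 2)⁻¹) (Ioi R) := by
      apply h2.congr_fun _ measurableSet_Ioi
      intro x hx
      have hx0 : 0 < x := hR0.trans hx
      show x ^ (-2:ℝ) = (x ^ 2)⁻¹
      rw [show (-2:ℝ) = -((2:ℕ):ℝ) by norm_num, Real.rpow_neg hx0.le, Real.rpow_natCast]
    exact this.const_mul C
  have h_int : IntegrableOn h (Ioi R) := by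
    apply hbound_int.mono' hmeas_h
    filter_upwards [ae_restrict_mem measurableSet_Ioi] with y hy
    rw [Real.norm_eq_abs, abs_of_nonneg (hfact y hy).1]
    exact (hfact y hy).2
  -- bound for the α-dependent part
  have hptα : ∀ α : ℝ, 0 < α → ∀ y ∈ Ioi R, ‖h y * y ^ (-α)‖ ≤ h y := by
    intro α hα y hy
    have hy1 : 1 ≤ y := (hR.trans hy).le
    have h1 : 0 ≤ h y := (hfact y hy).1
    have h2 : 0 ≤ y ^ (-α) := Real.rpow_nonneg (by linarith) _
    have h3 : y ^ (-α) ≤ 1 := Real.rpow_le_one_of_one_le_of_nonpos hy1 (by linarith)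
    rw [Real.norm_eq_abs, abs_of_nonneg (mul_nonneg h1 h2)]
    calc h y * y ^ (-α) ≤ h y * 1 := mul_le_mul_of_nonneg_left h3 h1
      _ = h y := mul_one _
  have hα_int : ∀ α : ℝ, 0 < α → IntegrableOn (fun y => h y * y ^ (-α)) (Ioi R) := by
    intro α hα
    apply h_int.mono' (hmeas_hα α)
    filter_upwards [ae_restrict_mem measurableSet_Ioi] with y hy
    exact hptα α hα y hy
  set M : ℝ := ∫ y in Ioi R, h y with hM
  have hIbound : ∀ α : ℝ, 0 < α → ‖∫ y in Ioi R, h y * y ^ (-α)‖ ≤ M := by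
    intro α hα
    calc ‖∫ y in Ioi R, h y * y ^ (-α)‖ ≤ ∫ y in Ioi R, ‖h y * y ^ (-α)‖ :=
          norm_integral_le_integral_norm _
      _ ≤ M := by
          apply setIntegral_mono_on ((hα_int α hα).norm) h_int measurableSet_Ioi
          exact fun y hy => hptα α hα y hy
  -- splitting the integral
  have hsplit : ∀ α : ℝ, 0 < α →
      (∫ y in Ioi R, (y:ℝ) ^ n * ((y - 1) ^ (-(n + 1 : ℝ)) * y ^ (-α)))
        = (∫ y in Ioi R, h y * y ^ (-α)) + R ^ (-α) / α := by
    intro α hα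
    have hpow_int : IntegrableOn (fun y : ℝ => y ^ (-1 - α)) (Ioi R) :=
      integrableOn_Ioi_rpow_of_lt (by linarith) hR0
    have e : ∀ y ∈ Ioi R, (y:ℝ) ^ n * ((y - 1) ^ (-(n + 1 : ℝ)) * y ^ (-α))
        = h y * y ^ (-α) + y ^ (-1 - α) := by
      intro y hy
      have hy0 : (0:ℝ) < y := hR0.trans hy
      have : y ^ (-1 - α : ℝ) = y⁻¹ * y ^ (-α) := by
        rw [show (-1 - α : ℝ) = (-1) + (-α) by ring, Real.rpow_add hy0,
          Real.rpow_neg_one]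
      rw [this, hh]
      ring
    rw [setIntegral_congr_fun measurableSet_Ioi e,
      integral_add (hα_int α hα) hpow_int]
    congr 1
    rw [integral_Ioi_rpow_of_lt (by linarith) hR0]
    rw [show (-1 - α + 1 : ℝ) = -α by ring]
    rw [div_neg, neg_div, neg_neg]
  -- the two limits
  have T1 : Tendsto (fun α : ℝ => α * ∫ y in Ioi R, h y * y ^ (-α))
      (nhdsWithin 0 (Ioi 0)) (nhds 0) := by
    apply squeeze_zero_norm' (a := fun α : ℝ => α * M)
    · filter_upwards [self_mem_nhdsWithin] with α (hα : (0:ℝ) < α)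
      rw [norm_mul, Real.norm_eq_abs α, abs_of_pos hα]
      exact mul_le_mul_of_nonneg_left (hIbound α hα) hα.le
    · have : Tendsto (fun α : ℝ => α * M) (nhds 0) (nhds (0 * M)) :=
        (tendsto_id.mul_const M)
      rw [zero_mul] at this
      exact this.mono_left nhdsWithin_le_nhds
  have T2 : Tendsto (fun α : ℝ => R ^ (-α)) (nhdsWithin 0 (Ioi 0)) (nhds 1) := by
    have hc : ContinuousAt (fun x : ℝ => R ^ x) (-0 : ℝ) :=
      Real.continuousAt_const_rpow (by positivity)
    have : Tendsto (fun α : ℝ => R ^ (-α)) (nhds 0) (nhds (R ^ (-0:ℝ))) :=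
      hc.tendsto.comp (continuous_neg.tendsto 0)
    rw [neg_zero, Real.rpow_zero] at this
    exact this.mono_left nhdsWithin_le_nhds
  have Tsum := T1.add T2
  rw [zero_add] at Tsum
  apply Tsum.congr'
  filter_upwards [self_mem_nhdsWithin] with α (hα : (0:ℝ) < α)
  have := hsplit α hα
  simp only [Nat.add_sub_cancel]
  push_cast
  rw [this, mul_add, mul_div_cancel₀ _ (ne_of_gt hα)]

lemma polar_eq (d : ℕ) (hd : 1 ≤ d) (R : ℝ) (hR : 1 < R) (α : ℝ) :
    ∫ y in {y : EuclideanSpace ℝ (Fin d) | R < ‖y‖},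
        (‖y‖ - 1) ^ (-(d : ℝ)) * ‖y‖ ^ (-α)
      = ((d : ℝ) * (volume (ball (0 : EuclideanSpace ℝ (Fin d)) 1)).toReal) *
        ∫ y in Ioi R, (y : ℝ) ^ (d - 1) * ((y - 1) ^ (-(d : ℝ)) * y ^ (-α)) := by
  haveI : Nonempty (Fin d) := ⟨⟨0, hd⟩⟩
  have hR0 : (0:ℝ) < R := lt_trans one_pos hR
  set F : ℝ → ℝ := fun r => (r - 1) ^ (-(d : ℝ)) * r ^ (-α) with hF
  have hs : MeasurableSet {y : EuclideanSpace ℝ (Fin d) | R < ‖y‖} :=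
    (isOpen_lt continuous_const continuous_norm).measurableSet
  have e1 : ∫ y in {y : EuclideanSpace ℝ (Fin d) | R < ‖y‖},
      (‖y‖ - 1) ^ (-(d : ℝ)) * ‖y‖ ^ (-α)
      = ∫ y : EuclideanSpace ℝ (Fin d), (Ioi R).indicator F ‖y‖ := by
    rw [← integral_indicator hs]
    congr 1 with y
  rw [e1, integral_fun_norm_addHaar volume ((Ioi R).indicator F)]
  rw [finrank_euclideanSpace_fin]
  have e2 : (fun y : ℝ => y ^ (d - 1) • (Ioi R).indicator F y)
      = (Ioi R).indicator (fun y => y ^ (d - 1) • F y) := by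
    ext y
    by_cases hy : y ∈ Ioi R <;> simp [Set.indicator, hy]
  rw [e2, setIntegral_indicator measurableSet_Ioi,
    Set.Ioi_inter_Ioi, max_eq_right hR0.le]
  simp only [smul_eq_mul, nsmul_eq_mul]
  rw [measureReal_def]
  ring

lemma sphere_const (d : ℕ) (hd : 1 ≤ d) :
    (d : ℝ) * (volume (ball (0 : EuclideanSpace ℝ (Fin d)) 1)).toReal
      = sphereMeasure d := by
  haveI : Nonempty (Fin d) := ⟨⟨0, hd⟩⟩
  rw [EuclideanSpace.volume_ball]
  have hd2 : (0:ℝ) < (d : ℝ) / 2 := by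
    have : (1:ℝ) ≤ (d:ℝ) := by exact_mod_cast hd
    linarith
  have hG : 0 < Real.Gamma ((d:ℝ)/2) := Real.Gamma_pos_of_pos hd2
  have hsqrt : Real.sqrt π ^ (Fintype.card (Fin d)) = π ^ ((d:ℝ)/2) := by
    rw [Fintype.card_fin, Real.sqrt_eq_rpow, ← Real.rpow_natCast (π ^ ((1:ℝ)/2)) d,
      ← Real.rpow_mul pi_pos.le]
    congr 1
    ring
  rw [Fintype.card_fin] at hsqrt ⊢
  rw [ENNReal.toReal_mul, ENNReal.toReal_pow, ENNReal.toReal_ofReal one_pos.le,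
    one_pow, one_mul, ENNReal.toReal_ofReal (by positivity),
    Real.Gamma_add_one (ne_of_gt hd2), hsqrt, sphereMeasure]
  have hdne : (d:ℝ) ≠ 0 := by positivity
  field_simp

end Aux

/-- `lim_{α→0⁺} α ∫_{|y|>R} (|y|-1)^{-d} |y|^{-α} dy = |S^{d-1}|` for `R > 1`. -/
theorem tail_integral_asymptotics
    (d : ℕ) (hd : 1 ≤ d) (R : ℝ) (hR : 1 < R) :
    Filter.Tendsto
      (fun α : ℝ => α *
        ∫ y in {y : EuclideanSpace ℝ (Fin d) | R < ‖y‖},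
          (‖y‖ - 1) ^ (-(d : ℝ)) * ‖y‖ ^ (-α))
      (nhdsWithin 0 (Set.Ioi 0)) (nhds (sphereMeasure d)) := by
  have hkey := key_limit d hd R hR
  have T := hkey.const_mul ((d : ℝ) *
    (volume (ball (0 : EuclideanSpace ℝ (Fin d)) 1)).toReal)
  rw [mul_one, sphere_const d hd] at T
  apply T.congr
  intro α
  rw [polar_eq d hd R hR α, sphere_const d hd]
  ring
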